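/- arXiv:2209.06601 — 3 statements merged into one kernel-verified Lean document; each statement's English description precedes it below -/
import Mathlib

section
/- Let λ ≥ 0 and let Γ be a subgroup of SL(2,ℝ) such that every element of Γ fixing ∞ equals ±[[1, nλ],[0,1]] for some integer n (i.e., the stabilizer of ∞ in Γ is trivial or generated by a translation by λ, up to sign). Let g = [[a,b],[c,d]] ∈ Γ with c ≠ 0, and let h ∈ Γ be an element whose bottom row is (rc, rd) for some real number r ≠ 0, so that the isometric spheres I(g) and I(h) are concentric. Then |r| = 1, and consequently I(g) = I(h): concentric isometric spheres of Γ coincide. -/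
open Complex Matrix Filter

noncomputable section

abbrev SL2R := Matrix.SpecialLinearGroup (Fin 2) ℝ

/-- The upper half-plane, as a subset of `ℂ`. -/
def UH : Set ℂ := {z : ℂ | 0 < z.im}

/-- Möbius action of `SL(2,ℝ)` on `ℂ`. -/
def moeb (g : SL2R) (z : ℂ) : ℂ :=
  ((g 0 0 : ℂ) * z + (g 0 1 : ℂ)) / ((g 1 0 : ℂ) * z + (g 1 1 : ℂ))

/-- The isometric sphere of `g` (requires `g 1 0 ≠ 0` to be meaningful). -/
def isoSphere (g : SL2R) : Set ℂ :=
  {z ∈ UH | ‖(g 1 0 : ℂ) * z + (g 1 1 : ℂ)‖ = 1}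

/-- The interior of the isometric sphere of `g`. -/
def isoInt (g : SL2R) : Set ℂ :=
  {z ∈ UH | ‖(g 1 0 : ℂ) * z + (g 1 1 : ℂ)‖ < 1}

/-- The exterior of the isometric sphere of `g`. -/
def isoExt (g : SL2R) : Set ℂ :=
  {z ∈ UH | 1 < ‖(g 1 0 : ℂ) * z + (g 1 1 : ℂ)‖}

/-- `g = 1` or `g = -1` (stated at the matrix level). -/
def IsPMOne (g : SL2R) : Prop :=
  (g : Matrix (Fin 2) (Fin 2) ℝ) = 1 ∨ (g : Matrix (Fin 2) (Fin 2) ℝ) = -1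

/-- Discreteness of a subgroup of `SL(2,ℝ)`: every element is isolated
(entrywise, which is equivalent to discreteness in the matrix topology). -/
def IsDiscreteSubgroup (Γ : Subgroup SL2R) : Prop :=
  ∀ g ∈ Γ, ∃ ε > (0 : ℝ), ∀ h ∈ Γ,
    (∀ i j, |(h : Matrix (Fin 2) (Fin 2) ℝ) i j - (g : Matrix (Fin 2) (Fin 2) ℝ) i j| < ε) → h = g

/-- The parabolic translation `t_λ = [[1,λ],[0,1]]` as an element of `SL(2,ℝ)`. -/
def tMat (l : ℝ) : SL2R := ⟨!![1, l; 0, 1], by norm_num [Matrix.det_fin_two_of]⟩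

/-- The common exterior `K` of all isometric spheres of `Γ`. -/
def commonExt (Γ : Subgroup SL2R) : Set ℂ :=
  ⋂ g ∈ {g : SL2R | g ∈ Γ ∧ ¬ IsPMOne g}, isoExt g

/-- An isometric sphere is relevant if it meets the frontier (in `ℍ`) of the
common exterior in more than one point. -/
def IsRelevant (Γ : Subgroup SL2R) (g : SL2R) : Prop :=
  (isoSphere g ∩ (frontier (commonExt Γ) ∩ UH)).Nontrivial

/-- The summit `-d/c + i/|c|` of the isometric sphere of `g`. -/
def summit (g : SL2R) : ℂ :=
  ((-(g 1 1) / g 1 0 : ℝ) : ℂ) + ((1 / |g 1 0| : ℝ) : ℂ) * Complex.I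

/-- Concentric isometric spheres of `Γ` coincide. -/
theorem concentric_isometric_spheres_coincide
    (lam : ℝ) (hlam : 0 ≤ lam) (Γ : Subgroup SL2R)
    (hstab : ∀ g ∈ Γ, g 1 0 = 0 →
      ∃ n : ℤ, (g : Matrix (Fin 2) (Fin 2) ℝ) = !![1, (n : ℝ) * lam; 0, 1] ∨
               (g : Matrix (Fin 2) (Fin 2) ℝ) = -!![1, (n : ℝ) * lam; 0, 1])
    (g h : SL2R) (hg : g ∈ Γ) (hh : h ∈ Γ) (hc : g 1 0 ≠ 0)
    (r : ℝ) (hr : r ≠ 0) (hc' : h 1 0 = r * g 1 0) (hd' : h 1 1 = r * g 1 1) :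
    |r| = 1 ∧ isoSphere g = isoSphere h := by
  have hdet : g 0 0 * g 1 1 - g 0 1 * g 1 0 = 1 := by
    have := g.2; rwa [Matrix.det_fin_two] at this
  set k := h * g⁻¹ with hkdef
  have hkΓ : k ∈ Γ := mul_mem hh (inv_mem hg)
  have hcoek : (k : Matrix (Fin 2) (Fin 2) ℝ) = (h : Matrix (Fin 2) (Fin 2) ℝ) * !![g 1 1, -(g 0 1); -(g 1 0), g 0 0] := by
    rw [hkdef, Matrix.SpecialLinearGroup.coe_mul, Matrix.SpecialLinearGroup.coe_inv,
      Matrix.adjugate_fin_two]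
  have hk10 : k 1 0 = 0 := by
    show (k : Matrix (Fin 2) (Fin 2) ℝ) 1 0 = 0
    rw [hcoek, Matrix.mul_apply, Fin.sum_univ_two]
    show h 1 0 * (g 1 1) + h 1 1 * (-(g 1 0)) = 0
    rw [hc', hd']
    ring
  have hk11 : k 1 1 = r := by
    show (k : Matrix (Fin 2) (Fin 2) ℝ) 1 1 = r
    rw [hcoek, Matrix.mul_apply, Fin.sum_univ_two]
    show h 1 0 * (-(g 0 1)) + h 1 1 * (g 0 0) = r
    rw [hc', hd']
    linear_combination r * hdet
  obtain ⟨n, hpm⟩ := hstab k hkΓ hk10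
  have habs : |r| = 1 := by
    rcases hpm with hp | hp
    · have : k 1 1 = 1 := by show (k : Matrix (Fin 2) (Fin 2) ℝ) 1 1 = 1; rw [hp]; simp
      rw [hk11] at this; rw [this]; norm_num
    · have : k 1 1 = -1 := by show (k : Matrix (Fin 2) (Fin 2) ℝ) 1 1 = -1; rw [hp]; simp
      rw [hk11] at this; rw [this]; norm_num
  refine ⟨habs, ?_⟩
  ext z
  simp only [isoSphere, Set.mem_setOf_eq, hc', hd']
  constructor <;> intro ⟨h1, h2⟩ <;> refine ⟨h1, ?_⟩
  · have : ((r * g 1 0 : ℝ) : ℂ) * z + ((r * g 1 1 : ℝ) : ℂ) = (r : ℂ) * (((g 1 0 : ℝ) : ℂ) * z + ((g 1 1 : ℝ) : ℂ)) := by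
      push_cast; ring
    rw [this, norm_mul, Complex.norm_real, Real.norm_eq_abs, habs, h2, one_mul]
  · have : ((r * g 1 0 : ℝ) : ℂ) * z + ((r * g 1 1 : ℝ) : ℂ) = (r : ℂ) * (((g 1 0 : ℝ) : ℂ) * z + ((g 1 1 : ℝ) : ℂ)) := by
      push_cast; ring
    rw [this, norm_mul, Complex.norm_real, Real.norm_eq_abs, habs, one_mul] at h2
    exact h2
end
end

section
/- Let p = [[a,b],[c,d]] ∈ SL(2,ℝ) with a + d = 2, p ≠ 1 and c ≠ 0 (a parabolic element not fixing ∞). Then for every integer n ≥ 1: (i) p^n = [[1 + n(a−1), nb],[nc, 1 + n(d−1)]]; (ii) the isometric sphere of p^{n+1} is contained in the interior of the isometric sphere of p^n, i.e., every z ∈ ℍ with |(n+1)c·z + (1 + (n+1)(d−1))| = 1 satisfies |nc·z + (1 + n(d−1))| < 1; and (iii) both endpoints −(1 + n(d−1))/(nc) − 1/(n|c|) and −(1 + n(d−1))/(nc) + 1/(n|c|) of the interval under I(p^n) converge, as n → ∞, to the unique real fixed point (a−1)/c of p. -/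
open Complex Matrix Filter

noncomputable section

lemma hlim (k : ℝ) : Filter.Tendsto (fun n : ℕ => 1 / ((n : ℝ) * k))
    Filter.atTop (nhds 0) := by
  have := (tendsto_one_div_atTop_nhds_zero_nat).mul_const (1 / k)
  rw [zero_mul] at this
  refine this.congr fun n => ?_
  rw [one_div_mul_one_div]

lemma key (p : SL2R) (htr : p 0 0 + p 1 1 = 2) (hc : p 1 0 ≠ 0) :
    Filter.Tendsto (fun n : ℕ => -(1 + (n : ℝ) * (p 1 1 - 1)) / ((n : ℝ) * p 1 0))
      Filter.atTop (nhds ((p 0 0 - 1) / p 1 0)) ∧ True := by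
  have ha : p 0 0 - 1 = -(p 1 1 - 1) := by linarith
  refine ⟨?_, trivial⟩
  have h1 : Filter.Tendsto (fun n : ℕ => (p 0 0 - 1) / p 1 0 - 1 / ((n : ℝ) * p 1 0))
      Filter.atTop (nhds ((p 0 0 - 1) / p 1 0)) := by
    have := (tendsto_const_nhds (x := (p 0 0 - 1) / p 1 0)
      (f := Filter.atTop (α := ℕ))).sub (hlim (p 1 0))
    simpa using this
  refine h1.congr' ?_
  filter_upwards [Filter.eventually_gt_atTop 0] with n hn
  have hn0 : (n : ℝ) ≠ 0 := Nat.cast_ne_zero.mpr hn.ne'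
  rw [ha]
  field_simp
  ring

set_option maxHeartbeats 1000000 in
/-- powers of a parabolic element, nesting of the isometric spheres
of its powers, and convergence of the endpoints of the intervals under them to
the fixed point. -/
theorem parabolic_powers_isometric_spheres
    (p : SL2R) (htr : p 0 0 + p 1 1 = 2) (hp : p ≠ 1) (hc : p 1 0 ≠ 0) :
    (∀ n : ℕ, 1 ≤ n →
      ((p ^ n : SL2R) : Matrix (Fin 2) (Fin 2) ℝ) =
        !![1 + (n : ℝ) * (p 0 0 - 1), (n : ℝ) * p 0 1;
           (n : ℝ) * p 1 0, 1 + (n : ℝ) * (p 1 1 - 1)]) ∧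
    (∀ n : ℕ, 1 ≤ n → ∀ z ∈ UH,
      ‖((((n : ℝ) + 1) * p 1 0 : ℝ) : ℂ) * z
          + ((1 + ((n : ℝ) + 1) * (p 1 1 - 1) : ℝ) : ℂ)‖ = 1 →
      ‖(((n : ℝ) * p 1 0 : ℝ) : ℂ) * z
          + ((1 + (n : ℝ) * (p 1 1 - 1) : ℝ) : ℂ)‖ < 1) ∧
    Filter.Tendsto
      (fun n : ℕ => -(1 + (n : ℝ) * (p 1 1 - 1)) / ((n : ℝ) * p 1 0) - 1 / ((n : ℝ) * |p 1 0|))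
      Filter.atTop (nhds ((p 0 0 - 1) / p 1 0)) ∧
    Filter.Tendsto
      (fun n : ℕ => -(1 + (n : ℝ) * (p 1 1 - 1)) / ((n : ℝ) * p 1 0) + 1 / ((n : ℝ) * |p 1 0|))
      Filter.atTop (nhds ((p 0 0 - 1) / p 1 0)) := by
  have hdet : p 0 0 * p 1 1 - p 0 1 * p 1 0 = 1 := by
    have := p.property
    rwa [Matrix.det_fin_two] at this
  -- Part (i)
  have part1 : ∀ n : ℕ, 1 ≤ n →
      ((p ^ n : SL2R) : Matrix (Fin 2) (Fin 2) ℝ) =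
        !![1 + (n : ℝ) * (p 0 0 - 1), (n : ℝ) * p 0 1;
           (n : ℝ) * p 1 0, 1 + (n : ℝ) * (p 1 1 - 1)] := by
    intro n hn
    induction n, hn using Nat.le_induction with
    | base =>
      rw [pow_one, Matrix.eta_fin_two (p : Matrix (Fin 2) (Fin 2) ℝ)]
      norm_num
    | succ n hn ih =>
      have : ((p ^ (n + 1) : SL2R) : Matrix (Fin 2) (Fin 2) ℝ)
          = ((p ^ n : SL2R) : Matrix (Fin 2) (Fin 2) ℝ) * (p : Matrix (Fin 2) (Fin 2) ℝ) := by
        rw [pow_succ]; rfl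
      rw [this, ih, Matrix.eta_fin_two (p : Matrix (Fin 2) (Fin 2) ℝ),
        Matrix.mul_fin_two]
      push_cast
      ext i j
      fin_cases i <;> fin_cases j <;> simp <;>
      [ linear_combination ((n:ℝ)) * p 0 0 * htr - (n:ℝ) * hdet;
        linear_combination ((n:ℝ)) * p 0 1 * htr;
        linear_combination ((n:ℝ)) * p 1 0 * htr;
        linear_combination ((n:ℝ)) * p 1 1 * htr - (n:ℝ) * hdet ]
  refine ⟨part1, ?_, ?_, ?_⟩
  · -- Part (ii)
    intro n hn z hz habs
    set c := p 1 0 with hcdef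
    set e := p 1 1 - 1 with hedef
    set A : ℝ := c * z.re + e with hA
    set B : ℝ := c * z.im with hB
    have hB0 : B ≠ 0 := mul_ne_zero hc (ne_of_gt hz)
    have hBsq : 0 < B ^ 2 := by positivity
    have h1 : Complex.normSq (((((n : ℝ) + 1) * c : ℝ) : ℂ) * z
        + ((1 + ((n : ℝ) + 1) * e : ℝ) : ℂ)) = 1 := by
      rw [← Complex.sq_norm, habs]; norm_num
    have hexp1 : Complex.normSq (((((n : ℝ) + 1) * c : ℝ) : ℂ) * z
        + ((1 + ((n : ℝ) + 1) * e : ℝ) : ℂ))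
        = (((n : ℝ) + 1) * A + 1) ^ 2 + (((n : ℝ) + 1) * B) ^ 2 := by
      simp only [Complex.normSq_apply, Complex.add_re, Complex.add_im, Complex.mul_re,
        Complex.mul_im, Complex.ofReal_re, Complex.ofReal_im, hA, hB]
      ring
    rw [hexp1] at h1
    have h1' := h1
    have hgoal : ((n : ℝ) * A + 1) ^ 2 + ((n : ℝ) * B) ^ 2 < 1 := by
      have hn1 : (1 : ℝ) ≤ (n : ℝ) := by exact_mod_cast hn
      nlinarith [sq_nonneg A, sq_nonneg ((n:ℝ) * A)]
    have h2 : Complex.normSq ((((n : ℝ) * c : ℝ) : ℂ) * z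
        + ((1 + (n : ℝ) * e : ℝ) : ℂ)) < 1 := by
      calc Complex.normSq ((((n : ℝ) * c : ℝ) : ℂ) * z + ((1 + (n : ℝ) * e : ℝ) : ℂ))
          = ((n : ℝ) * A + 1) ^ 2 + ((n : ℝ) * B) ^ 2 := by
            simp only [Complex.normSq_apply, Complex.add_re, Complex.add_im, Complex.mul_re,
              Complex.mul_im, Complex.ofReal_re, Complex.ofReal_im, hA, hB]
            ring
        _ < 1 := hgoal
    rw [Complex.norm_def]
    calc Real.sqrt (Complex.normSq ((((n : ℝ) * c : ℝ) : ℂ) * z + ((1 + (n : ℝ) * e : ℝ) : ℂ)))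
        < Real.sqrt 1 := Real.sqrt_lt_sqrt (Complex.normSq_nonneg _) h2
      _ = 1 := Real.sqrt_one
  · have ha : p 0 0 - 1 = -(p 1 1 - 1) := by linarith
    have := key p htr hc
    have := (this.1).sub (hlim |p 1 0|)
    simpa using this
  · have ha : p 0 0 - 1 = -(p 1 1 - 1) := by linarith
    have := key p htr hc
    have := (this.1).add (hlim |p 1 0|)
    simpa using this
end
end

section
/- Let λ > 0 and r ∈ ℝ, and let Γ be a subgroup of SL(2,ℝ) whose subgroup of elements fixing ∞ is exactly Γ_∞ = {±[[1, nλ],[0,1]] : n ∈ ℤ}, and such that the family of open disks {int I(g) : g ∈ Γ \ Γ_∞} is locally finite in ℍ. Let F = {z ∈ ℍ : r < Re z < r+λ} ∩ ⋂_{g ∈ Γ \ Γ_∞} ext I(g) (a Ford fundamental domain for Γ). If z lies in the frontier ∂F of F in ℍ and h ∈ Γ is such that h·z also lies in ∂F, then Im(h·z) = Im z. -/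
open Complex Matrix Filter

noncomputable section

lemma moeb_im' (g : SL2R) (z : ℂ) :
    (moeb g z).im = z.im / Complex.normSq ((g 1 0 : ℂ) * z + (g 1 1 : ℂ)) := by
  have hdet := g.prop
  rw [Matrix.det_fin_two] at hdet
  rw [moeb, Complex.div_im, div_sub_div_same]
  congr 1
  simp only [Complex.add_re, Complex.add_im, Complex.mul_re, Complex.mul_im,
    Complex.ofReal_re, Complex.ofReal_im]
  linear_combination z.im * hdet

lemma denom_ne' (g : SL2R) (z : ℂ) (hz : 0 < z.im) :
    (g 1 0 : ℂ) * z + (g 1 1 : ℂ) ≠ 0 := by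
  intro hc
  have hdet := g.prop
  rw [Matrix.det_fin_two] at hdet
  have him : (g 1 0) * z.im = 0 := by
    have := congrArg Complex.im hc
    simpa using this
  have hc0 : g 1 0 = 0 := by
    rcases mul_eq_zero.1 him with h | h
    · exact h
    · exact absurd h hz.ne'
  have hre : (g 1 1 : ℝ) = 0 := by
    have := congrArg Complex.re hc
    simpa [hc0] using this
  rw [hc0, hre] at hdet; simp at hdet

/-- points of the frontier (in `ℍ`) of a Ford fundamental domain
that are `Γ`-equivalent have the same imaginary part. -/
theorem ford_boundary_same_height
    (lam : ℝ) (hlam : 0 < lam) (r : ℝ) (Γ : Subgroup SL2R)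
    (hstab : ∀ g : SL2R, (g ∈ Γ ∧ g 1 0 = 0) ↔
      ∃ n : ℤ, (g : Matrix (Fin 2) (Fin 2) ℝ) = !![1, (n : ℝ) * lam; 0, 1] ∨
               (g : Matrix (Fin 2) (Fin 2) ℝ) = -!![1, (n : ℝ) * lam; 0, 1])
    (hlf : ∀ z ∈ UH, ∃ U ∈ nhds z,
      {g : SL2R | g ∈ Γ ∧ g 1 0 ≠ 0 ∧ (isoInt g ∩ U).Nonempty}.Finite)
    (F : Set ℂ)
    (hF : F = {z ∈ UH | r < z.re ∧ z.re < r + lam} ∩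
      ⋂ g ∈ {g : SL2R | g ∈ Γ ∧ g 1 0 ≠ 0}, isoExt g)
    (z : ℂ) (hz : z ∈ frontier F ∩ UH)
    (h : SL2R) (hh : h ∈ Γ) (hhz : moeb h z ∈ frontier F ∩ UH) :
    (moeb h z).im = z.im := by
  obtain ⟨hzf, hzU⟩ := hz
  obtain ⟨hhzf, hhzU⟩ := hhz
  have hzim : 0 < z.im := hzU
  -- closure bound
  have hcl : ∀ g : SL2R, g ∈ Γ → g 1 0 ≠ 0 → ∀ w ∈ closure F,
      1 ≤ ‖(g 1 0 : ℂ) * w + (g 1 1 : ℂ)‖ := by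
    intro g hg hg0 w hw
    have hclosed : IsClosed {w : ℂ | 1 ≤ ‖(g 1 0 : ℂ) * w + (g 1 1 : ℂ)‖} := by
      have : {w : ℂ | 1 ≤ ‖(g 1 0 : ℂ) * w + (g 1 1 : ℂ)‖} =
          (fun w => ‖(g 1 0 : ℂ) * w + (g 1 1 : ℂ)‖) ⁻¹' Set.Ici 1 := rfl
      rw [this]
      exact IsClosed.preimage (continuous_norm.comp (by continuity)) isClosed_Ici
    have hsub : F ⊆ {w : ℂ | 1 ≤ ‖(g 1 0 : ℂ) * w + (g 1 1 : ℂ)‖} := by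
      intro w hw
      rw [hF] at hw
      have := Set.mem_iInter₂.1 hw.2 g ⟨hg, hg0⟩
      exact le_of_lt this.2
    exact closure_minimal hsub hclosed hw
  by_cases hc : h 1 0 = 0
  · obtain ⟨n, hm | hm⟩ := (hstab h).1 ⟨hh, hc⟩
    · have h11 : (h : Matrix (Fin 2) (Fin 2) ℝ) 1 1 = 1 := by rw [hm]; simp
      rw [moeb_im', hc, h11]
      norm_num
    · have h11 : (h : Matrix (Fin 2) (Fin 2) ℝ) 1 1 = -1 := by rw [hm]; simp
      rw [moeb_im', hc, h11]
      norm_num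
  · 
    have hz1 : 1 ≤ ‖(h 1 0 : ℂ) * z + (h 1 1 : ℂ)‖ :=
      hcl h hh hc z (frontier_subset_closure hzf)
    have hinv := Matrix.SpecialLinearGroup.SL2_inv_expl h
    have e10 : (h⁻¹ : SL2R) 1 0 = -(h 1 0) := by rw [hinv]; rfl
    have e11 : (h⁻¹ : SL2R) 1 1 = h 0 0 := by rw [hinv]; rfl
    have hden : (h 1 0 : ℂ) * z + (h 1 1 : ℂ) ≠ 0 := denom_ne' h z hzim
    have hdetC : (h 0 0 : ℂ) * (h 1 1 : ℂ) - (h 0 1 : ℂ) * (h 1 0 : ℂ) = 1 := by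
      have hdet := h.prop
      rw [Matrix.det_fin_two] at hdet
      exact_mod_cast hdet
    have key : ((h⁻¹ : SL2R) 1 0 : ℂ) * moeb h z + ((h⁻¹ : SL2R) 1 1 : ℂ) =
        1 / ((h 1 0 : ℂ) * z + (h 1 1 : ℂ)) := by
      rw [e10, e11, moeb]
      push_cast
      field_simp
      linear_combination hdetC
    have hz2 : 1 ≤ ‖((h⁻¹ : SL2R) 1 0 : ℂ) * moeb h z + ((h⁻¹ : SL2R) 1 1 : ℂ)‖ := by
      refine hcl h⁻¹ (inv_mem hh) ?_ _ (frontier_subset_closure hhzf)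
      rw [e10]; simpa using hc
    rw [key] at hz2
    rw [norm_div, norm_one] at hz2
    have habs : ‖(h 1 0 : ℂ) * z + (h 1 1 : ℂ)‖ = 1 := by
      have hpos : 0 < ‖(h 1 0 : ℂ) * z + (h 1 1 : ℂ)‖ :=
        norm_pos_iff.2 hden
      have : ‖(h 1 0 : ℂ) * z + (h 1 1 : ℂ)‖ ≤ 1 := by
        rw [le_div_iff₀ hpos, one_mul] at hz2
        exact hz2
      linarith
    rw [moeb_im']
    rw [← Complex.sq_norm, habs]
    norm_num
end
end
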